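/- Let I ⊂ ℝ be an open interval and let f be analytic on an open set containing I ∪ ℂ⁻ with f integrable on I. Define G(z) = ∫_I f(x)/(z−x) dx for z ∈ ℂ⁺. Then G extends analytically to ℂ⁺ ∪ I ∪ ℂ⁻, and for z ∈ ℂ⁻ the extension equals ∫_I f(x)/(z−x) dx − 2πi f(z). -/

import Mathlib

open Complex Set MeasureTheory

open Metric Filter
open Complex Set MeasureTheory Metric Filter
set_option maxHeartbeats 1000000

/-- Differentiability of a Cauchy-type integral away from its support. -/
lemma hasDerivAt_cauchy {S : Set ℝ} (hS : MeasurableSet S) {g : ℝ → ℂ}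
    (hg : IntegrableOn g S) {z₀ : ℂ} {δ : ℝ} (hδ : 0 < δ)
    (hd : ∀ x ∈ S, δ ≤ dist z₀ (x : ℂ)) :
    HasDerivAt (fun z : ℂ => ∫ x in S, g x / (z - (x : ℂ)))
      (∫ x in S, -g x / (z₀ - (x : ℂ)) ^ 2) z₀ := by
  have hae : ∀ᵐ (x : ℝ) ∂(volume.restrict S), δ ≤ dist z₀ (x : ℂ) :=
    (ae_restrict_mem hS).mono fun x hx => hd x hx
  have hne : ∀ x : ℝ, δ ≤ dist z₀ (x : ℂ) → ∀ z ∈ ball z₀ (δ/2), δ/2 ≤ ‖z - x‖ := by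
    intro x hx z hz
    have h1 : dist z₀ (x:ℂ) ≤ dist z₀ z + dist z (x:ℂ) := dist_triangle _ _ _
    have h2 : dist z₀ z < δ/2 := by rw [dist_comm]; exact mem_ball.mp hz
    have : dist z (x:ℂ) = ‖z - x‖ := by rw [Complex.dist_eq]
    linarith [this ▸ (by linarith : δ - δ/2 ≤ dist z (x:ℂ))]
  have hmeas : ∀ z : ℂ, AEStronglyMeasurable (fun x : ℝ => g x / (z - (x:ℂ)))
      (volume.restrict S) := by
    intro z
    exact (hg.aestronglyMeasurable.aemeasurable.div
      ((continuous_const.sub Complex.continuous_ofReal).aemeasurable)).aestronglyMeasurable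
  refine (hasDerivAt_integral_of_dominated_loc_of_lip (F := fun z (x : ℝ) => g x / (z - (x:ℂ)))
    (bound := fun x => ‖g x‖ * (4/δ^2))
    (ball_mem_nhds z₀ (half_pos hδ)) (Eventually.of_forall fun z => hmeas z) ?_ ?_ ?_ ?_ ?_).2
  · -- integrable at z₀
    refine Integrable.mono' (hg.norm.mul_const (δ⁻¹)) (hmeas z₀) (hae.mono fun x hx => ?_)
    have hx' : δ ≤ ‖z₀ - x‖ := by rwa [Complex.dist_eq] at hx
    rw [norm_div, div_eq_mul_inv]
    have hinv : ‖z₀ - (x:ℂ)‖⁻¹ ≤ δ⁻¹ := by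
      apply inv_anti₀ hδ
      exact hx'
    exact mul_le_mul_of_nonneg_left hinv (norm_nonneg _)
  · -- F' measurable
    exact (hg.neg.aestronglyMeasurable.aemeasurable.div
      (((continuous_const.sub Complex.continuous_ofReal).pow 2).aemeasurable)).aestronglyMeasurable
  · -- Lipschitz
    refine hae.mono fun x hx => ?_
    refine LipschitzOnWith.of_dist_le_mul fun z₁ h₁ z₂ h₂ => ?_
    have e₁ : δ/2 ≤ ‖z₁ - x‖ := hne x hx z₁ h₁
    have e₂ : δ/2 ≤ ‖z₂ - x‖ := hne x hx z₂ h₂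
    have n₁ : (z₁ - (x:ℂ)) ≠ 0 := by
      intro h; rw [h] at e₁; simp at e₁; linarith
    have n₂ : (z₂ - (x:ℂ)) ≠ 0 := by
      intro h; rw [h] at e₂; simp at e₂; linarith
    have key : g x / (z₁ - x) - g x / (z₂ - x) = g x * (z₂ - z₁) / ((z₁ - x) * (z₂ - x)) := by
      field_simp; ring
    rw [dist_eq_norm, key, dist_eq_norm, norm_div, norm_mul, norm_mul]
    have hpos : (0:ℝ) < δ/2 := half_pos hδ
    have hden : δ/2 * (δ/2) ≤ ‖z₁ - (x:ℂ)‖ * ‖z₂ - (x:ℂ)‖ := by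
      exact mul_le_mul e₁ e₂ (le_of_lt hpos) (norm_nonneg _)
    have hnum : ‖g x‖ * ‖z₂ - z₁‖ = ‖g x‖ * ‖z₁ - z₂‖ := by rw [norm_sub_rev]
    calc ‖g x‖ * ‖z₂ - z₁‖ / (‖z₁ - (x:ℂ)‖ * ‖z₂ - (x:ℂ)‖)
        ≤ ‖g x‖ * ‖z₁ - z₂‖ / (δ/2 * (δ/2)) := by
          rw [hnum]
          gcongr
      _ = (‖g x‖ * (4/δ^2)) * ‖z₁ - z₂‖ := by field_simp; ring
      _ ≤ ↑(Real.nnabs (‖g x‖ * (4/δ^2))) * ‖z₁ - z₂‖ := by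
          gcongr; exact le_abs_self _
  · exact hg.norm.mul_const _
  · refine hae.mono fun x hx => ?_
    have n₀ : (z₀ - (x:ℂ)) ≠ 0 := by
      intro h
      rw [Complex.dist_eq, h] at hx; simp at hx; linarith
    have h1 : HasDerivAt (fun z : ℂ => z - (x:ℂ)) 1 z₀ := (hasDerivAt_id z₀).sub_const _
    have h2 := (h1.inv n₀).const_mul (g x)
    have hfun : (fun z : ℂ => g x / (z - ↑x)) = fun z => g x * (z - (x:ℂ))⁻¹ := by
      funext z; exact div_eq_mul_inv _ _
    rw [hfun]
    exact h2.congr_deriv (by ring)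

lemma integrableOn_cauchy_div {S : Set ℝ} {g : ℝ → ℂ}
    (hg : IntegrableOn g S) {z : ℂ} {δ : ℝ} (hδ : 0 < δ)
    (hd : ∀ x ∈ S, δ ≤ dist z (x : ℂ)) (hS : MeasurableSet S) :
    IntegrableOn (fun x : ℝ => g x / (z - (x : ℂ))) S := by
  refine Integrable.mono' (hg.norm.mul_const (δ⁻¹))
    ((hg.aestronglyMeasurable.aemeasurable.div
      ((continuous_const.sub Complex.continuous_ofReal).aemeasurable)).aestronglyMeasurable)
    (((ae_restrict_mem hS).mono fun x hx => ?_))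
  have hx' : δ ≤ ‖z - x‖ := by
    have := hd x hx; rwa [Complex.dist_eq] at this
  rw [norm_div, div_eq_mul_inv]
  exact mul_le_mul_of_nonneg_left (inv_anti₀ hδ hx') (norm_nonneg _)

lemma complex_log_neg_of_im_neg {w : ℂ} (h : w.im < 0) :
    Complex.log (-w) = Complex.log w + Real.pi * I := by
  apply Complex.ext
  · simp [Complex.log_re, Complex.log_im]
  · simp [Complex.log_re, Complex.log_im, Complex.arg_neg_eq_arg_add_pi_of_im_neg h]

lemma complex_log_neg_of_im_pos {w : ℂ} (h : 0 < w.im) :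
    Complex.log (-w) = Complex.log w - Real.pi * I := by
  apply Complex.ext
  · simp [Complex.log_re, Complex.log_im]
  · simp [Complex.log_re, Complex.log_im, Complex.arg_neg_eq_arg_sub_pi_of_im_pos h]

lemma integral_inv_Ioo {a b : ℝ} (hab : a < b) {z : ℂ} (hz : z.im ≠ 0) :
    ∫ x in Ioo a b, (z - (x:ℂ))⁻¹ = Complex.log (z - a) - Complex.log (z - b) := by
  have hcont : Continuous (fun x : ℝ => (z - (x:ℂ))⁻¹) := by
    apply Continuous.inv₀ (continuous_const.sub Complex.continuous_ofReal)
    intro x h0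
    apply hz
    have : (z - (x:ℂ)).im = 0 := by rw [show z - (x:ℂ) = 0 from h0]; simp
    simpa using this
  have hderiv : ∀ x ∈ uIcc a b,
      HasDerivAt (fun y : ℝ => -Complex.log (z - (y:ℂ))) ((z - (x:ℂ))⁻¹) x := by
    intro x _
    have hslit : z - (x:ℂ) ∈ Complex.slitPlane := by
      apply Complex.mem_slitPlane_iff.2
      right; simpa using hz
    have h1 : HasDerivAt (fun w : ℂ => z - w) (-1) (x:ℂ) := (hasDerivAt_id _).const_sub z
    have h2 := ((Complex.hasDerivAt_log hslit).comp (x:ℂ) h1).neg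
    have h3 := h2.comp_ofReal
    convert h3 using 1
    · rfl
    field_simp
  have := intervalIntegral.integral_eq_sub_of_hasDerivAt hderiv
    (hcont.intervalIntegrable a b)
  rw [← integral_Ioc_eq_integral_Ioo, ← intervalIntegral.integral_of_le hab.le]
  rw [this]
  ring

lemma split_id {f : ℂ → ℂ} {S : Set ℝ} (hS : MeasurableSet S)
    (hSfin : volume S < ⊤)
    (hint : IntegrableOn (fun x : ℝ => f x) S) {z : ℂ} {δ : ℝ} (hδ : 0 < δ)
    (hd : ∀ x ∈ S, δ ≤ dist z (x : ℂ)) :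
    (∫ x in S, (f x - f z) / (z - x)) =
      (∫ x in S, f x / (z - x)) - f z * ∫ x in S, (z - (x:ℂ))⁻¹ := by
  have h1 : IntegrableOn (fun x : ℝ => f x / (z - x)) S :=
    integrableOn_cauchy_div hint hδ hd hS
  have hone : IntegrableOn (fun _ : ℝ => (1:ℂ)) S := by
    simp [integrableOn_const, hSfin]
  have h2 : IntegrableOn (fun x : ℝ => (1:ℂ) / (z - (x:ℂ))) S :=
    integrableOn_cauchy_div hone hδ hd hS
  have h2' : IntegrableOn (fun x : ℝ => (z - (x:ℂ))⁻¹) S := by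
    simpa [one_div] using h2
  have heq : ∀ x : ℝ, (f x - f z) / (z - x) = f x / (z - x) - f z * (z - (x:ℂ))⁻¹ := by
    intro x
    rw [sub_div, div_eq_mul_inv, div_eq_mul_inv]
  simp_rw [heq]
  rw [integral_sub h1 (h2'.const_mul (f z)), MeasureTheory.integral_const_mul]
lemma diff_at_real {a b : ℝ} {f : ℂ → ℂ} {U : Set ℂ} (hU : IsOpen U)
    (hf : DifferentiableOn ℂ f U)
    (hint : IntegrableOn (fun x : ℝ => f x) (Ioo a b)) {t : ℝ} (ht : t ∈ Ioo a b)
    (htU : (t:ℂ) ∈ U) :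
    DifferentiableAt ℂ (fun z : ℂ => ∫ x in Ioo a b, (f x - f z) / (z - x)) (t:ℂ) := by
  obtain ⟨ρ, hρ, hρU⟩ := Metric.isOpen_iff.1 hU _ htU
  set ρ₂ := min (t - a) (b - t) with hρ₂def
  have hρ₂ : 0 < ρ₂ := lt_min (by linarith [ht.1]) (by linarith [ht.2])
  set r := min (ρ/5) (ρ₂/3) with hrdef
  have hr : 0 < r := lt_min (by linarith) (by linarith)
  have hr5 : r ≤ ρ/5 := min_le_left _ _
  have hr3 : r ≤ ρ₂/3 := min_le_right _ _
  have hball2 : ball ((t:ℂ)) (2*r) ⊆ U := by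
    intro w hw
    exact hρU (mem_ball.2 (lt_of_lt_of_le (mem_ball.1 hw) (by linarith)))
  have hcb2 : closedBall ((t:ℂ)) (2*r) ⊆ U := by
    intro w hw
    exact hρU (mem_ball.2 (lt_of_le_of_lt (mem_closedBall.1 hw) (by linarith)))
  set J := Ioo (t - 2*r) (t + 2*r) with hJdef
  have hJsub : J ⊆ Ioo a b := by
    intro x hx
    have h1 : ρ₂ ≤ t - a := min_le_left _ _
    have h2 : ρ₂ ≤ b - t := min_le_right _ _
    exact ⟨by cases hx; linarith, by cases hx; linarith⟩
  have hJmeas : MeasurableSet J := measurableSet_Ioo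
  set far := Ioo a b \ J with hfardef
  have hfarmeas : MeasurableSet far := measurableSet_Ioo.diff hJmeas
  have hfarsub : far ⊆ Ioo a b := diff_subset
  -- analytic structure
  have hA : AnalyticOnNhd ℂ f U := hf.analyticOnNhd hU
  have hA1 : AnalyticOnNhd ℂ (deriv f) U := hA.deriv
  have hA2 : AnalyticOnNhd ℂ (deriv (deriv f)) U := hA1.deriv
  have hc1 : ContinuousOn (deriv f) U := hA1.continuousOn
  have hc2 : ContinuousOn (deriv (deriv f)) U := hA2.continuousOn
  -- bounds on the first and second derivatives
  obtain ⟨M₁', hM₁'⟩ := (isCompact_closedBall ((t:ℂ)) (2*r)).exists_bound_of_continuousOn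
    (hc1.mono hcb2)
  obtain ⟨M₂', hM₂'⟩ := (isCompact_closedBall ((t:ℂ)) (2*r)).exists_bound_of_continuousOn
    (hc2.mono hcb2)
  set M₁ := max M₁' 0 with hM₁def
  set M₂ := max M₂' 0 with hM₂def
  have hM₁0 : 0 ≤ M₁ := le_max_right _ _
  have hM₂0 : 0 ≤ M₂ := le_max_right _ _
  have hM₁ : ∀ w ∈ closedBall ((t:ℂ)) (2*r), ‖deriv f w‖ ≤ M₁ :=
    fun w hw => (hM₁' w hw).trans (le_max_left _ _)
  have hM₂ : ∀ w ∈ closedBall ((t:ℂ)) (2*r), ‖deriv (deriv f) w‖ ≤ M₂ :=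
    fun w hw => (hM₂' w hw).trans (le_max_left _ _)
  -- Lipschitz estimates on the ball of radius 2r
  have hLipf : ∀ w₁ ∈ ball ((t:ℂ)) (2*r), ∀ w₂ ∈ ball ((t:ℂ)) (2*r),
      ‖f w₁ - f w₂‖ ≤ M₁ * ‖w₁ - w₂‖ := by
    intro w₁ h₁ w₂ h₂
    exact (convex_ball _ _).norm_image_sub_le_of_norm_hasDerivWithin_le
      (fun w hw => ((hf.differentiableAt (hU.mem_nhds (hball2 hw))).hasDerivAt).hasDerivWithinAt)
      (fun w hw => hM₁ w (ball_subset_closedBall hw)) h₂ h₁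
  have hLipd : ∀ w₁ ∈ ball ((t:ℂ)) (2*r), ∀ w₂ ∈ ball ((t:ℂ)) (2*r),
      ‖deriv f w₁ - deriv f w₂‖ ≤ M₂ * ‖w₁ - w₂‖ := by
    intro w₁ h₁ w₂ h₂
    exact (convex_ball _ _).norm_image_sub_le_of_norm_hasDerivWithin_le
      (fun w hw => (((hA1 w (hball2 hw)).differentiableAt).hasDerivAt).hasDerivWithinAt)
      (fun w hw => hM₂ w (ball_subset_closedBall hw)) h₂ h₁
  -- geometric facts
  have hdist_real : ∀ x y : ℝ, dist ((x:ℂ)) ((y:ℂ)) = |x - y| := by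
    intro x y
    rw [dist_eq_norm, show (x:ℂ) - y = ((x - y : ℝ):ℂ) by push_cast; ring,
      Complex.norm_real, Real.norm_eq_abs]
  have hJball : ∀ x ∈ J, ((x:ℂ)) ∈ ball ((t:ℂ)) (2*r) := by
    intro x hx
    rw [mem_ball, hdist_real, abs_lt]
    exact ⟨by linarith [hx.1], by linarith [hx.2]⟩
  have hseg : ∀ z ∈ ball ((t:ℂ)) (2*r), ∀ x ∈ J, ∀ s : ℝ, 0 ≤ s → s ≤ 1 →
      z + (s:ℂ) * ((x:ℂ) - z) ∈ ball ((t:ℂ)) (2*r) := by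
    intro z hz x hx s hs0 hs1
    have hzt : ‖z - (t:ℂ)‖ < 2*r := by rw [← dist_eq_norm]; exact mem_ball.1 hz
    have hxt : ‖((x:ℂ)) - (t:ℂ)‖ < 2*r := by
      have := hJball x hx; rw [mem_ball, dist_eq_norm] at this; exact this
    rw [mem_ball, dist_eq_norm]
    have hrw : z + (s:ℂ) * ((x:ℂ) - z) - (t:ℂ)
        = ((1:ℂ) - s) * (z - t) + (s:ℂ) * ((x:ℂ) - t) := by ring
    rw [hrw]
    have hb : ‖((1:ℂ) - s) * (z - t) + (s:ℂ) * ((x:ℂ) - t)‖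
        ≤ (1 - s) * ‖z - (t:ℂ)‖ + s * ‖((x:ℂ)) - (t:ℂ)‖ := by
      refine (norm_add_le _ _).trans ?_
      rw [norm_mul, norm_mul]
      have e1 : ‖(1:ℂ) - (s:ℂ)‖ = 1 - s := by
        rw [show (1:ℂ) - (s:ℂ) = ((1 - s : ℝ) : ℂ) by push_cast; ring]
        rw [Complex.norm_real, Real.norm_eq_abs, _root_.abs_of_nonneg (by linarith)]
      have e2 : ‖((s:ℝ):ℂ)‖ = s := by
        rw [Complex.norm_real, Real.norm_eq_abs, _root_.abs_of_nonneg hs0]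
      rw [e1, e2]
    refine lt_of_le_of_lt hb ?_
    rcases le_total (‖z - (t:ℂ)‖) (‖((x:ℂ)) - (t:ℂ)‖) with hc | hc
    · nlinarith
    · nlinarith
  -- measurability helpers
  have hfm : AEStronglyMeasurable (fun x : ℝ => f x) (volume.restrict (Ioo a b)) :=
    hint.aestronglyMeasurable
  have hfmJ : AEStronglyMeasurable (fun x : ℝ => f x) (volume.restrict J) :=
    hfm.mono_measure (Measure.restrict_mono hJsub le_rfl)
  have hfmFar : AEStronglyMeasurable (fun x : ℝ => f x) (volume.restrict far) :=
    hfm.mono_measure (Measure.restrict_mono hfarsub le_rfl)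
  have hmeasdiv : ∀ (z : ℂ) (S : Set ℝ),
      AEStronglyMeasurable (fun x : ℝ => f x) (volume.restrict S) →
      AEStronglyMeasurable (fun x : ℝ => (f x - f z) / (z - x)) (volume.restrict S) := by
    intro z S hS
    exact ((hS.sub aestronglyMeasurable_const).aemeasurable.div
      ((continuous_const.sub Complex.continuous_ofReal).aemeasurable)).aestronglyMeasurable
  -- distance from far points
  have hfarball : ∀ z ∈ ball ((t:ℂ)) r, ∀ x ∈ far, r ≤ dist z ((x:ℂ)) := by
    intro z hz x hx
    have hxJ : 2*r ≤ |x - t| := by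
      by_contra hcon
      push_neg at hcon
      exact hx.2 (by rw [abs_lt] at hcon; exact ⟨by linarith [hcon.1], by linarith [hcon.2]⟩)
    have h1 : dist ((x:ℂ)) ((t:ℂ)) ≤ dist ((x:ℂ)) z + dist z ((t:ℂ)) := dist_triangle _ _ _
    have h2 : dist z ((t:ℂ)) < r := mem_ball.1 hz
    have h3 : dist ((x:ℂ)) ((t:ℂ)) = |x - t| := hdist_real x t
    rw [dist_comm]
    linarith [h3 ▸ h1]
  -- integrability of the integrand on J and far
  have hIntJ : ∀ z ∈ ball ((t:ℂ)) r, IntegrableOn (fun x : ℝ => (f x - f z)/(z - x)) J := by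
    intro z hz
    have hconstJ : IntegrableOn (fun _ : ℝ => M₁) J :=
      integrableOn_const measure_Ioo_lt_top.ne
    refine Integrable.mono' hconstJ (hmeasdiv z J hfmJ)
      (((ae_restrict_mem hJmeas).mono fun x hx => ?_))
    by_cases hxz : z - (x:ℂ) = 0
    · rw [hxz, div_zero]; simpa using hM₁0
    · rw [norm_div, div_le_iff₀ (norm_pos_iff.2 hxz)]
      have hb := hLipf ((x:ℂ)) (hJball x hx) z (ball_subset_ball (by linarith) hz)
      calc ‖f ↑x - f z‖ ≤ M₁ * ‖(x:ℂ) - z‖ := hb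
        _ = M₁ * ‖z - (x:ℂ)‖ := by rw [norm_sub_rev]
  have hIntFar : ∀ z ∈ ball ((t:ℂ)) r, IntegrableOn (fun x : ℝ => (f x - f z)/(z - x)) far := by
    intro z hz
    have hfarfin : volume far < ⊤ := lt_of_le_of_lt (measure_mono hfarsub) measure_Ioo_lt_top
    have hconstF : IntegrableOn (fun _ : ℝ => ‖f z‖) far := integrableOn_const hfarfin.ne
    have hbnd : IntegrableOn (fun x : ℝ => (‖f x‖ + ‖f z‖) * r⁻¹) far :=
      ((hint.mono_set hfarsub).norm.add hconstF).mul_const _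
    refine Integrable.mono' hbnd (hmeasdiv z far hfmFar)
      (((ae_restrict_mem hfarmeas).mono fun x hx => ?_))
    have hd := hfarball z hz x hx
    have hd' : r ≤ ‖z - (x:ℂ)‖ := by rwa [dist_eq_norm] at hd
    rw [norm_div, div_eq_mul_inv]
    exact mul_le_mul (norm_sub_le _ _) (inv_anti₀ hr hd') (by positivity) (by positivity)
  have hsplit : ∀ z ∈ ball ((t:ℂ)) r,
      (∫ x in Ioo a b, (f x - f z)/(z - x)) =
        (∫ x in J, (f x - f z)/(z - x)) + ∫ x in far, (f x - f z)/(z - x) := by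
    intro z hz
    have hun : Ioo a b = J ∪ far := (union_diff_cancel hJsub).symm
    rw [hun, setIntegral_union disjoint_sdiff_right hfarmeas (hIntJ z hz) (hIntFar z hz)]
  -- far part is differentiable at t
  have hfarfin : volume far < ⊤ := lt_of_le_of_lt (measure_mono hfarsub) measure_Ioo_lt_top
  have hone : IntegrableOn (fun _ : ℝ => (1:ℂ)) far := integrableOn_const hfarfin.ne
  have htball : (t:ℂ) ∈ ball ((t:ℂ)) r := mem_ball_self hr
  have hFarDiff : DifferentiableAt ℂ (fun z : ℂ => ∫ x in far, (f x - f z)/(z - x)) (t:ℂ) := by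
    have d1 := (hasDerivAt_cauchy hfarmeas (hint.mono_set hfarsub) hr
      (fun x hx => hfarball _ htball x hx)).differentiableAt
    have d2 := (hasDerivAt_cauchy hfarmeas hone hr
      (fun x hx => hfarball _ htball x hx)).differentiableAt
    have hfd : DifferentiableAt ℂ f (t:ℂ) := hf.differentiableAt (hU.mem_nhds htU)
    have heq : ∀ z ∈ ball ((t:ℂ)) r,
        (∫ x in far, (f x - f z) / (z - x))
          = (∫ x in far, f x / (z - x))
            - f z * ∫ x in far, (fun _ : ℝ => (1:ℂ)) x / (z - (x:ℂ)) := by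
      intro z hz
      rw [split_id (f := f) hfarmeas hfarfin (hint.mono_set hfarsub) hr (hfarball z hz)]
      congr 1
      congr 1
      refine integral_congr_ae (Eventually.of_forall fun x => ?_)
      simp [one_div]
    exact (d1.sub (hfd.mul d2)).congr_of_eventuallyEq
      (eventually_of_mem (ball_mem_nhds _ hr) fun z hz => heq z hz)
  -- ===== near part =====
  set I01 := Ioo (0:ℝ) 1 with hI01def
  have hI01meas : MeasurableSet I01 := measurableSet_Ioo
  set μpr := (volume.restrict J).prod (volume.restrict I01) with hμdef
  have hμpr : μpr = (volume.prod volume).restrict (J ×ˢ I01) := Measure.prod_restrict _ _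
  haveI : IsFiniteMeasure (volume.restrict J) :=
    ⟨by rw [Measure.restrict_apply_univ]; exact measure_Ioo_lt_top⟩
  haveI : IsFiniteMeasure (volume.restrict I01) :=
    ⟨by rw [Measure.restrict_apply_univ]; exact measure_Ioo_lt_top⟩
  have haeprod : ∀ᵐ p : ℝ × ℝ ∂μpr, p.1 ∈ J ∧ p.2 ∈ I01 := by
    rw [hμpr]
    exact (ae_restrict_mem (hJmeas.prod hI01meas)).mono fun p hp => ⟨hp.1, hp.2⟩
  have hmapc : ∀ z : ℂ, Continuous (fun p : ℝ × ℝ => z + ((p.2:ℝ):ℂ) * (((p.1:ℝ):ℂ) - z)) := by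
    intro z
    exact continuous_const.add ((Complex.continuous_ofReal.comp continuous_snd).mul
      ((Complex.continuous_ofReal.comp continuous_fst).sub continuous_const))
  have hFmeas : ∀ z : ℂ, AEStronglyMeasurable
      (fun p : ℝ × ℝ => deriv f (z + ((p.2:ℝ):ℂ) * (((p.1:ℝ):ℂ) - z))) μpr := by
    intro z
    exact ((stronglyMeasurable_deriv f).comp_measurable (hmapc z).measurable).aestronglyMeasurable
  have hwin : ∀ z ∈ ball ((t:ℂ)) r, ∀ᵐ p : ℝ × ℝ ∂μpr,
      z + ((p.2:ℝ):ℂ) * (((p.1:ℝ):ℂ) - z) ∈ ball ((t:ℂ)) (2*r) := by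
    intro z hz
    exact haeprod.mono fun p hp =>
      hseg z (ball_subset_ball (by linarith) hz) p.1 hp.1 p.2 hp.2.1.le hp.2.2.le
  have hIntProd : ∀ z ∈ ball ((t:ℂ)) r,
      Integrable (fun p : ℝ × ℝ => deriv f (z + ((p.2:ℝ):ℂ) * (((p.1:ℝ):ℂ) - z))) μpr := by
    intro z hz
    refine Integrable.mono' (integrable_const M₁) (hFmeas z) ((hwin z hz).mono fun p hp => ?_)
    exact hM₁ _ (ball_subset_closedBall hp)
  have haene : ∀ z : ℂ, ∀ᵐ x : ℝ ∂volume, ((x:ℂ)) ≠ z := by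
    intro z
    rw [ae_iff]
    refine measure_mono_null (fun x hx => ?_) (measure_singleton z.re)
    simp only [mem_setOf_eq, not_not] at hx
    have : x = z.re := by rw [← hx]; simp
    exact mem_singleton_iff.2 this
  have hinner : ∀ z ∈ ball ((t:ℂ)) r, ∀ x ∈ J, ((x:ℂ)) ≠ z →
      (∫ s in I01, deriv f (z + ((s:ℝ):ℂ) * (((x:ℝ):ℂ) - z))) = (f x - f z) / ((x:ℂ) - z) := by
    intro z hz x hx hxz
    have hz2 : z ∈ ball ((t:ℂ)) (2*r) := ball_subset_ball (by linarith) hz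
    have hwU : ∀ s : ℝ, s ∈ uIcc (0:ℝ) 1 → z + ((s:ℝ):ℂ) * (((x:ℝ):ℂ) - z) ∈ U := by
      intro s hs
      rw [uIcc_of_le zero_le_one] at hs
      exact hball2 (hseg z hz2 x hx s hs.1 hs.2)
    have hderiv : ∀ s ∈ uIcc (0:ℝ) 1,
        HasDerivAt (fun s : ℝ => f (z + ((s:ℝ):ℂ) * (((x:ℝ):ℂ) - z)))
          (deriv f (z + ((s:ℝ):ℂ) * (((x:ℝ):ℂ) - z)) * (((x:ℝ):ℂ) - z)) s := by
      intro s hs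
      have hin : HasDerivAt (fun w : ℂ => z + w * (((x:ℝ):ℂ) - z)) (((x:ℝ):ℂ) - z) ((s:ℝ):ℂ) := by
        simpa using ((hasDerivAt_id ((s:ℝ):ℂ)).mul_const (((x:ℝ):ℂ) - z)).const_add z
      have hout : HasDerivAt f (deriv f (z + ((s:ℝ):ℂ) * (((x:ℝ):ℂ) - z)))
          (z + ((s:ℝ):ℂ) * (((x:ℝ):ℂ) - z)) :=
        (hf.differentiableAt (hU.mem_nhds (hwU s hs))).hasDerivAt
      exact (hout.comp ((s:ℝ):ℂ) hin).comp_ofReal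
    have hcont : ContinuousOn
        (fun s : ℝ => deriv f (z + ((s:ℝ):ℂ) * (((x:ℝ):ℂ) - z)) * (((x:ℝ):ℂ) - z))
        (uIcc (0:ℝ) 1) := by
      refine ContinuousOn.mul ?_ continuousOn_const
      refine hc1.comp ?_ (fun s hs => hwU s hs)
      exact Continuous.continuousOn
        (continuous_const.add (Complex.continuous_ofReal.mul continuous_const))
    have hFTC := intervalIntegral.integral_eq_sub_of_hasDerivAt hderiv hcont.intervalIntegrable
    rw [intervalIntegral.integral_mul_const] at hFTC
    have hsimp1 : z + (((1:ℝ)):ℂ) * (((x:ℝ):ℂ) - z) = ((x:ℝ):ℂ) := by push_cast; ring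
    have hsimp0 : z + (((0:ℝ)):ℂ) * (((x:ℝ):ℂ) - z) = z := by push_cast; ring
    rw [hsimp1, hsimp0] at hFTC
    rw [← integral_Ioc_eq_integral_Ioo, ← intervalIntegral.integral_of_le zero_le_one]
    rw [eq_div_iff (sub_ne_zero.2 hxz)]
    exact hFTC
  have hNr : ∀ z ∈ ball ((t:ℂ)) r,
      (∫ x in J, (f x - f z)/(z - x))
        = - ∫ p : ℝ × ℝ, deriv f (z + ((p.2:ℝ):ℂ) * (((p.1:ℝ):ℂ) - z)) ∂μpr := by
    intro z hz
    have hfub := MeasureTheory.integral_integral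
      (f := fun (x : ℝ) (s : ℝ) => deriv f (z + ((s:ℝ):ℂ) * (((x:ℝ):ℂ) - z))) (hIntProd z hz)
    rw [← hfub, ← integral_neg]
    refine setIntegral_congr_ae hJmeas ?_
    refine (haene z).mono fun x hxz hxJ => ?_
    rw [hinner z hz x hxJ hxz]
    rw [show z - ((x:ℝ):ℂ) = -(((x:ℝ):ℂ) - z) by ring, div_neg]
  have hΦdiff : DifferentiableAt ℂ
      (fun z : ℂ => ∫ p : ℝ × ℝ, deriv f (z + ((p.2:ℝ):ℂ) * (((p.1:ℝ):ℂ) - z)) ∂μpr) (t:ℂ) := by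
    refine (hasDerivAt_integral_of_dominated_loc_of_lip
      (F := fun (z : ℂ) (p : ℝ × ℝ) => deriv f (z + ((p.2:ℝ):ℂ) * (((p.1:ℝ):ℂ) - z)))
      (F' := fun p : ℝ × ℝ =>
        deriv (deriv f) (((t:ℝ):ℂ) + ((p.2:ℝ):ℂ) * (((p.1:ℝ):ℂ) - ((t:ℝ):ℂ))) * (1 - ((p.2:ℝ):ℂ)))
      (bound := fun _ => M₂) (ball_mem_nhds _ hr) (Eventually.of_forall fun z => hFmeas z)
      (hIntProd _ htball) ?_ ?_ ?_ ?_).2.differentiableAt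
    · refine AEStronglyMeasurable.mul ?_ ?_
      · exact ((stronglyMeasurable_deriv (deriv f)).comp_measurable
          (hmapc ((t:ℝ):ℂ)).measurable).aestronglyMeasurable
      · exact (continuous_const.sub
          (Complex.continuous_ofReal.comp continuous_snd)).aestronglyMeasurable
    · refine haeprod.mono fun p hp => ?_
      refine LipschitzOnWith.of_dist_le_mul fun z₁ h₁ z₂ h₂ => ?_
      have hw₁ := hseg z₁ (ball_subset_ball (by linarith) h₁) p.1 hp.1 p.2 hp.2.1.le hp.2.2.le
      have hw₂ := hseg z₂ (ball_subset_ball (by linarith) h₂) p.1 hp.1 p.2 hp.2.1.le hp.2.2.le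
      rw [dist_eq_norm, dist_eq_norm]
      have hL := hLipd _ hw₁ _ hw₂
      have hwsub : (z₁ + ((p.2:ℝ):ℂ)*(((p.1:ℝ):ℂ) - z₁)) - (z₂ + ((p.2:ℝ):ℂ)*(((p.1:ℝ):ℂ) - z₂))
          = ((1:ℂ) - ((p.2:ℝ):ℂ)) * (z₁ - z₂) := by ring
      rw [hwsub, norm_mul] at hL
      have h1s : ‖(1:ℂ) - ((p.2:ℝ):ℂ)‖ ≤ 1 := by
        rw [show (1:ℂ) - ((p.2:ℝ):ℂ) = ((1 - p.2 : ℝ):ℂ) by push_cast; ring, Complex.norm_real,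
          Real.norm_eq_abs, _root_.abs_of_nonneg (by linarith [hp.2.2.le])]
        linarith [hp.2.1.le]
      have habs : ((Real.nnabs M₂ : NNReal) : ℝ) = |M₂| := Real.coe_nnabs _
      rw [habs]
      have e1 : M₂ * (‖(1:ℂ) - ((p.2:ℝ):ℂ)‖ * ‖z₁ - z₂‖) ≤ M₂ * ‖z₁ - z₂‖ := by
        have : ‖(1:ℂ) - ((p.2:ℝ):ℂ)‖ * ‖z₁ - z₂‖ ≤ 1 * ‖z₁ - z₂‖ :=
          mul_le_mul_of_nonneg_right h1s (norm_nonneg _)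
        nlinarith [norm_nonneg (z₁ - z₂)]
      have e2 : M₂ * ‖z₁ - z₂‖ ≤ |M₂| * ‖z₁ - z₂‖ :=
        mul_le_mul_of_nonneg_right (le_abs_self _) (norm_nonneg _)
      linarith [hL.trans e1]
    · exact integrable_const _
    · refine haeprod.mono fun p hp => ?_
      have hw₀ := hseg ((t:ℝ):ℂ) (mem_ball_self (by linarith)) p.1 hp.1 p.2 hp.2.1.le hp.2.2.le
      have hout : HasDerivAt (deriv f)
          (deriv (deriv f) (((t:ℝ):ℂ) + ((p.2:ℝ):ℂ)*(((p.1:ℝ):ℂ) - ((t:ℝ):ℂ))))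
          (((t:ℝ):ℂ) + ((p.2:ℝ):ℂ)*(((p.1:ℝ):ℂ) - ((t:ℝ):ℂ))) :=
        ((hA1 _ (hball2 hw₀)).differentiableAt).hasDerivAt
      have hin : HasDerivAt (fun z : ℂ => z + ((p.2:ℝ):ℂ)*(((p.1:ℝ):ℂ) - z))
          (1 - ((p.2:ℝ):ℂ)) ((t:ℝ):ℂ) := by
        have := (hasDerivAt_id ((t:ℝ):ℂ)).add
          (((hasDerivAt_id ((t:ℝ):ℂ)).const_sub (((p.1:ℝ):ℂ))).const_mul ((p.2:ℝ):ℂ))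
        exact this.congr_deriv (by ring)
      exact hout.comp ((t:ℝ):ℂ) hin
  have hNearDiff : DifferentiableAt ℂ (fun z : ℂ => ∫ x in J, (f x - f z)/(z - x)) (t:ℂ) := by
    refine (hΦdiff.neg).congr_of_eventuallyEq ?_
    exact eventually_of_mem (ball_mem_nhds _ hr) fun z hz => hNr z hz
  refine (hNearDiff.add hFarDiff).congr_of_eventuallyEq ?_
  exact eventually_of_mem (ball_mem_nhds _ hr) fun z hz => hsplit z hz

/-- Analytic continuation of the Cauchy transform of `f(x) 1_I(x) dx` through the
interval `I = (a,b)`: if `f` is analytic on an open set containing `I ∪ ℂ⁻` and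
integrable on `I`, then `G(z) = ∫_I f(x)/(z-x) dx` (defined for `z ∈ ℂ⁺`) extends
holomorphically to `ℂ⁺ ∪ I ∪ ℂ⁻`, and on `ℂ⁻` the extension equals
`∫_I f(x)/(z-x) dx - 2πi f(z)`. -/
theorem cauchy_transform_analytic_continuation (a b : ℝ) (f : ℂ → ℂ)
    (U : Set ℂ) (hU : IsOpen U)
    (hIU : {z : ℂ | z.im = 0 ∧ z.re ∈ Set.Ioo a b} ⊆ U)
    (hCU : {z : ℂ | z.im < 0} ⊆ U)
    (hf : DifferentiableOn ℂ f U)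
    (hint : MeasureTheory.IntegrableOn (fun x : ℝ => f x) (Set.Ioo a b)) :
    ∃ G : ℂ → ℂ,
      DifferentiableOn ℂ G
        ({z : ℂ | 0 < z.im} ∪ {z : ℂ | z.im = 0 ∧ z.re ∈ Set.Ioo a b} ∪
          {z : ℂ | z.im < 0}) ∧
      (∀ z : ℂ, 0 < z.im → G z = ∫ x in Set.Ioo a b, f x / (z - x)) ∧
      (∀ z : ℂ, z.im < 0 →
        G z = (∫ x in Set.Ioo a b, f x / (z - x)) - 2 * Real.pi * Complex.I * f z) := by
  have hupper_open : IsOpen {z : ℂ | 0 < z.im} := isOpen_lt continuous_const Complex.continuous_im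
  have hlower_open : IsOpen {z : ℂ | z.im < 0} := isOpen_lt Complex.continuous_im continuous_const
  rcases le_or_gt b a with hba | hab
  · -- degenerate case: empty interval
    have hempty : Ioo a b = ∅ := Ioo_eq_empty (not_lt.2 hba)
    refine ⟨fun z => if 0 < z.im then 0 else -(2 * Real.pi * Complex.I) * f z, ?_, ?_, ?_⟩
    · intro z hz
      rcases hz with (hz | hz) | hz
      · refine ((differentiableAt_const (0:ℂ)).congr_of_eventuallyEq ?_).differentiableWithinAt
        exact eventually_of_mem (hupper_open.mem_nhds hz) fun w hw => if_pos hw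
      · rw [hempty] at hz; simp at hz
      · have hd : DifferentiableAt ℂ (fun z => -(2 * Real.pi * Complex.I) * f z) z :=
          (differentiableAt_const _).mul (hf.differentiableAt (hU.mem_nhds (hCU hz)))
        refine (hd.congr_of_eventuallyEq ?_).differentiableWithinAt
        refine eventually_of_mem (hlower_open.mem_nhds hz) fun w hw => ?_
        exact if_neg (not_lt.2 (le_of_lt hw))
    · intro z hz
      show (if 0 < z.im then (0:ℂ) else -(2 * Real.pi * Complex.I) * f z) = _
      rw [if_pos hz, hempty]
      simp
    · intro z hz
      show (if 0 < z.im then (0:ℂ) else -(2 * Real.pi * Complex.I) * f z) = _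
      rw [if_neg (not_lt.2 (le_of_lt hz)), hempty]
      simp
  · -- main case a < b
    set T : ℂ → ℂ := fun z => ∫ x in Ioo a b, f x / (z - x) with hTdef
    set G : ℂ → ℂ := fun z => (∫ x in Ioo a b, (f x - f z) / (z - x)) +
      f z * (Complex.log (z - a) - Complex.log ((b:ℂ) - z) - Real.pi * Complex.I) with hGdef
    have hdistIm : ∀ z : ℂ, ∀ x ∈ Ioo a b, |z.im| ≤ dist z ((x:ℝ):ℂ) := by
      intro z x _
      rw [Complex.dist_eq]
      have := Complex.abs_im_le_norm (z - x)
      simpa using this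
    have hTdiff : ∀ z : ℂ, z.im ≠ 0 → DifferentiableAt ℂ T z := by
      intro z hz
      exact (hasDerivAt_cauchy measurableSet_Ioo hint (abs_pos.2 hz)
        (hdistIm z)).differentiableAt
    have hGid : ∀ z : ℂ, z.im ≠ 0 → G z = T z + f z *
        ((Complex.log (z - a) - Complex.log ((b:ℂ) - z) - Real.pi * Complex.I)
          - (Complex.log (z - a) - Complex.log (z - b))) := by
      intro z hz
      have hsplit := split_id (f := f) measurableSet_Ioo measure_Ioo_lt_top hint
        (abs_pos.2 hz) (hdistIm z)
      have hK := integral_inv_Ioo hab hz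
      rw [hGdef]
      simp only
      rw [hsplit, hK]
      ring
    have hup : ∀ z : ℂ, 0 < z.im → G z = T z := by
      intro z hz
      have hlog : Complex.log (z - b) = Complex.log ((b:ℂ) - z) + Real.pi * Complex.I := by
        have him : ((b:ℂ) - z).im < 0 := by simpa using hz
        have := complex_log_neg_of_im_neg him
        rwa [show -((b:ℂ) - z) = z - b by ring] at this
      rw [hGid z (ne_of_gt hz), hlog]
      ring
    have hlow : ∀ z : ℂ, z.im < 0 →
        G z = T z - 2 * Real.pi * Complex.I * f z := by
      intro z hz
      have hlog : Complex.log (z - b) = Complex.log ((b:ℂ) - z) - Real.pi * Complex.I := by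
        have him : 0 < ((b:ℂ) - z).im := by simpa using hz
        have := complex_log_neg_of_im_pos him
        rwa [show -((b:ℂ) - z) = z - b by ring] at this
      rw [hGid z (ne_of_lt hz), hlog]
      ring
    refine ⟨G, ?_, fun z hz => hup z hz, fun z hz => hlow z hz⟩
    intro z hz
    rcases hz with (hz | hz) | hz
    · refine ((hTdiff z (ne_of_gt hz)).congr_of_eventuallyEq ?_).differentiableWithinAt
      exact eventually_of_mem (hupper_open.mem_nhds hz) fun w hw => hup w hw
    · -- the interval
      have hzre : z = ((z.re:ℝ):ℂ) := by
        apply Complex.ext <;> simp [hz.1]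
      have htmem : ((z.re:ℝ):ℂ) ∈ U := hIU (by
        simp only [mem_setOf_eq, Complex.ofReal_im, Complex.ofReal_re]
        exact ⟨trivial, hz.2⟩)
      have hH : DifferentiableAt ℂ
          (fun w : ℂ => ∫ x in Ioo a b, (f x - f w) / (w - x)) ((z.re:ℝ):ℂ) :=
        diff_at_real hU hf hint hz.2 htmem
      have hfd : DifferentiableAt ℂ f ((z.re:ℝ):ℂ) := hf.differentiableAt (hU.mem_nhds htmem)
      have hslit1 : (((z.re:ℝ):ℂ) - a) ∈ Complex.slitPlane := by
        apply Complex.mem_slitPlane_iff.2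
        left
        simp only [Complex.sub_re, Complex.ofReal_re]
        linarith [hz.2.1]
      have hslit2 : ((b:ℂ) - ((z.re:ℝ):ℂ)) ∈ Complex.slitPlane := by
        apply Complex.mem_slitPlane_iff.2
        left
        simp only [Complex.sub_re, Complex.ofReal_re]
        linarith [hz.2.2]
      have hd1 : DifferentiableAt ℂ (fun w : ℂ => Complex.log (w - a)) ((z.re:ℝ):ℂ) := by
        have hinner : DifferentiableAt ℂ (fun w : ℂ => w - (a:ℂ)) ((z.re:ℝ):ℂ) :=
          differentiableAt_id.sub_const _
        exact (Complex.differentiableAt_log hslit1).comp ((z.re:ℝ):ℂ) hinner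
      have hd2 : DifferentiableAt ℂ (fun w : ℂ => Complex.log ((b:ℂ) - w)) ((z.re:ℝ):ℂ) := by
        have hinner : DifferentiableAt ℂ (fun w : ℂ => (b:ℂ) - w) ((z.re:ℝ):ℂ) :=
          (differentiableAt_const _).sub differentiableAt_id
        exact (Complex.differentiableAt_log hslit2).comp ((z.re:ℝ):ℂ) hinner
      have hdL : DifferentiableAt ℂ (fun w : ℂ =>
          Complex.log (w - a) - Complex.log ((b:ℂ) - w) - Real.pi * Complex.I) ((z.re:ℝ):ℂ) :=
        (hd1.sub hd2).sub_const _
      have := hH.add (hfd.mul hdL)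
      rw [hzre]
      exact this.differentiableWithinAt
    · have hd : DifferentiableAt ℂ (fun w => T w - 2 * Real.pi * Complex.I * f w) z :=
        (hTdiff z (ne_of_lt hz)).sub ((differentiableAt_const (2 * Real.pi * Complex.I)).mul
          (hf.differentiableAt (hU.mem_nhds (hCU hz))))
      refine (hd.congr_of_eventuallyEq ?_).differentiableWithinAt
      exact eventually_of_mem (hlower_open.mem_nhds hz) fun w hw => hlow w hw
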